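/- Let h be a positive definite inner product on a finite-dimensional real vector space V and W ∈ V with h(W,W) < 1. Set λ = 1 - h(W,W), define the bilinear form a(u,v) = (λ·h(u,v) + h(W,u)·h(W,v))/λ², and the linear form b(v) = -h(W,v)/λ. Then a is positive definite and a(b♯,b♯) = h(W,W) < 1, where b♯ is the vector representing b with respect to a. -/

import Mathlib

/-- Translation from navigation data `(h, W)` to the Randers data `(a, b)`:
`a` is positive definite and `a(b♯, b♯) = h(W, W) < 1`. -/
theorem stmt1 {V : Type*} [AddCommGroup V] [Module ℝ V] [FiniteDimensional ℝ V]
    (h : LinearMap.BilinForm ℝ V)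
    (hsymm : ∀ u v : V, h u v = h v u)
    (hpos : ∀ v : V, v ≠ 0 → 0 < h v v)
    (W : V) (hW : h W W < 1)
    (a : V → V → ℝ)
    (ha : ∀ u v : V, a u v =
      ((1 - h W W) * h u v + h W u * h W v) / (1 - h W W) ^ 2)
    (b : V → ℝ)
    (hb : ∀ v : V, b v = -(h W v) / (1 - h W W)) :
    (∀ v : V, v ≠ 0 → 0 < a v v) ∧
      ∀ bs : V, (∀ v : V, a bs v = b v) → a bs bs = h W W ∧ a bs bs < 1 := by
  have hWW0 : 0 ≤ h W W := by
    rcases eq_or_ne W 0 with rfl | hne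
    · simp
    · exact (hpos W hne).le
  have hl : (0:ℝ) < 1 - h W W := by linarith
  have hl' : (1:ℝ) - h W W ≠ 0 := ne_of_gt hl
  constructor
  · intro v hv
    rw [ha]
    apply div_pos
    · nlinarith [hpos v hv, mul_self_nonneg (h W v)]
    · positivity
  · intro bs hbs
    have hsm : h bs ((-(1 - h W W)) • W) = -(1 - h W W) * h bs W := by
      simp [map_smul]
    have hsm' : h W ((-(1 - h W W)) • W) = -(1 - h W W) * h W W := by
      simp [map_smul]
    have e2 := hbs ((-(1 - h W W)) • W)
    rw [ha, hb, hsm, hsm', hsymm bs W] at e2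
    -- derive h W bs = -(1 - h W W) * h W W
    have key : h W bs = -(1 - h W W) * h W W := by
      field_simp at e2
      have h2 : ((1 : ℝ) - h W W) ^ 2 ≠ 0 := pow_ne_zero 2 hl'
      have hz : (1 - h W W) ^ 2 * (h W bs + (1 - h W W) * h W W) = 0 := by
        linear_combination -(1 - h W W) ^ 2 * e2
      rcases mul_eq_zero.mp hz with h' | h'
      · exact absurd h' h2
      · linarith
    have habs : a bs bs = h W W := by
      rw [hbs bs, hb, key]
      field_simp
    exact ⟨habs, habs ▸ hW⟩
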